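/- Let K be a field and L/K a separable field extension of degree 3 that is not Galois. Then for every prime ℓ, the restriction map H^1(K, ℤ/ℓ) → H^1(L, ℤ/ℓ) is injective. -/

import Mathlib

open IntermediateField Polynomial

/-- If a nodup multiset has cardinality at most that of a finset contained in it,
then every member of the multiset lies in the finset. -/
private lemma mem_finset_of_mem_multiset {Ω : Type*} [DecidableEq Ω] {M : Multiset Ω}
    (hnd : M.Nodup) {s : Finset Ω} (hsub : ∀ x ∈ s, x ∈ M) (hcard : Multiset.card M ≤ s.card)
    {β : Ω} (hβ : β ∈ M) : β ∈ s := by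
  have h1 : s ⊆ M.toFinset := fun x hx => Multiset.mem_toFinset.2 (hsub x hx)
  have h2 : M.toFinset.card = Multiset.card M := Multiset.toFinset_card_of_nodup hnd
  have h3 : s = M.toFinset := Finset.eq_of_subset_of_card_le h1 (by omega)
  rw [h3]
  exact Multiset.mem_toFinset.2 hβ

/-- We topologize `ℤ/ℓ` discretely, so that `H¹(K, ℤ/ℓ)` (trivial action) is the group of
continuous homomorphisms from the absolute Galois group to `ℤ/ℓ`. -/
instance (n : ℕ) : TopologicalSpace (ZMod n) := ⊥

/-- Let `K` be a field and `L/K` a separable field extension of degree 3 that is not Galois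
(realized as an intermediate field of an algebraic closure `Ω` of `K`).  Then for every prime
`ℓ`, the restriction map `H¹(K, ℤ/ℓ) → H¹(L, ℤ/ℓ)` is injective: every continuous character
`χ : Gal(Ω/K) → ℤ/ℓ` vanishing on `Gal(Ω/L)` is trivial. -/
theorem stmt1 (K : Type) [Field K]
    (L : IntermediateField K (AlgebraicClosure K))
    [Algebra.IsSeparable K L] (hdeg : Module.finrank K L = 3)
    (hnotGal : ¬ IsGalois K L) :
    ∀ (ℓ : ℕ), ℓ.Prime →
      ∀ χ : ContinuousMonoidHom
          (AlgebraicClosure K ≃ₐ[K] AlgebraicClosure K) (Multiplicative (ZMod ℓ)),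
        (∀ σ : AlgebraicClosure K ≃ₐ[L] AlgebraicClosure K,
            χ (σ.restrictScalars K) = 1) →
          ∀ τ, χ τ = 1 := by
  classical
  intro ℓ hℓ χ hχ
  set Ω := AlgebraicClosure K with hΩ
  haveI : FiniteDimensional K L := FiniteDimensional.of_finrank_pos (by omega)
  -- primitive element
  obtain ⟨a, ha⟩ := Field.exists_primitive_element K L
  set α : Ω := (a : Ω) with hαdef
  have hα : α ∈ L := a.2
  have hLα : K⟮α⟯ = L := by
    have h1 := congrArg (IntermediateField.map L.val) ha
    rw [adjoin_map, Set.image_singleton, ← AlgHom.fieldRange_eq_map, fieldRange_val] at h1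
    exact h1
  have hint : IsIntegral K α := (Algebra.IsIntegral.isIntegral (R := K) α)
  set f : K[X] := minpoly K α with hfdef
  have hαf : aeval α f = 0 := minpoly.aeval K α
  have hsep : f.Separable := by
    have : minpoly K α = minpoly K a := minpoly.algebraMap_eq (algebraMap L Ω).injective a
    rw [hfdef, this]
    exact Algebra.IsSeparable.isSeparable K a
  have hdeg3 : f.natDegree = 3 := by
    have h1 : Module.finrank K ↥K⟮α⟯ = f.natDegree := IntermediateField.adjoin.finrank hint
    rw [hLα, hdeg] at h1
    omega
  -- key fact: χ kills anything fixing α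
  have hkey : ∀ τ : Ω ≃ₐ[K] Ω, τ α = α → χ τ = 1 := by
    intro τ hτ
    have hfix : ∀ x ∈ L, τ x = x := by
      intro x hx
      have hx' : x ∈ Algebra.adjoin K ({α} : Set Ω) := by
        rw [← IntermediateField.adjoin_simple_toSubalgebra_of_isAlgebraic hint.isAlgebraic]
        exact (hLα ▸ hx : x ∈ K⟮α⟯)
      have hle : Algebra.adjoin K ({α} : Set Ω) ≤
          AlgHom.equalizer (τ : Ω →ₐ[K] Ω) (AlgHom.id K Ω) := by
        apply Algebra.adjoin_le
        intro y hy
        rw [Set.mem_singleton_iff] at hy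
        subst hy
        exact hτ
      exact hle hx'
    have hmem : τ ∈ L.fixingSubgroup := (mem_fixingSubgroup_iff _ τ).2 (fun y hy => hfix y hy)
    have := hχ ((fixingSubgroupEquiv L) ⟨τ, hmem⟩)
    have heq : (((fixingSubgroupEquiv L) ⟨τ, hmem⟩).restrictScalars K) = τ := by
      ext x; rfl
    rwa [heq] at this
  have heqχ : ∀ τ1 τ2 : Ω ≃ₐ[K] Ω, τ1 α = τ2 α → χ τ1 = χ τ2 := by
    intro τ1 τ2 h
    have h0 : χ (τ2⁻¹ * τ1) = 1 := by
      apply hkey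
      rw [AlgEquiv.mul_apply, h]
      exact AlgEquiv.symm_apply_apply τ2 α
    rw [map_mul, map_inv] at h0
    exact (inv_mul_eq_one.mp h0).symm
  -- non-Galois gives σ0 with σ0 α ∉ L
  have hroot_of : ∀ (τ : Ω ≃ₐ[K] Ω) (β : Ω), aeval β f = 0 → aeval (τ β) f = 0 := by
    intro τ β hβ
    rw [aeval_algHom_apply τ β f, hβ, map_zero]
  obtain ⟨σ0, hσ0⟩ : ∃ σ0 : Ω ≃ₐ[K] Ω, σ0 α ∉ L := by
    by_contra h
    push_neg at h
    apply hnotGal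
    have hnorm : Normal K ↥L := by
      rw [normal_iff_forall_map_le']
      intro σ
      rw [← hLα, adjoin_map, Set.image_singleton, hLα]
      exact adjoin_le_iff.2 (Set.singleton_subset_iff.2 (h σ))
    exact { to_isSeparable := inferInstance, to_normal := hnorm }
  set α2 : Ω := σ0 α with hα2def
  have hα2f : aeval α2 f = 0 := hroot_of σ0 α hαf
  have hα2L : α2 ∉ L := hσ0
  have hne2α : α2 ≠ α := fun h => hα2L (h ▸ hα)
  -- instances over L
  haveI : Algebra.IsAlgebraic L Ω := Algebra.IsAlgebraic.tower_top (K := K) L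
  haveI : IsAlgClosure L Ω := ⟨inferInstance, inferInstance⟩
  haveI : Normal L Ω := IsAlgClosure.normal L Ω
  have hint2 : IsIntegral L α2 := (Algebra.IsIntegral.isIntegral (R := L) α2)
  set p : (L : Type)[X] := minpoly L α2 with hpdef
  have hα2p : aeval α2 p = 0 := minpoly.aeval L α2
  have hpirr : Irreducible p := minpoly.irreducible hint2
  have hpmonic : p.Monic := minpoly.monic hint2
  have hpdvd : p ∣ f.map (algebraMap K L) := minpoly.dvd L α2 (by
    rw [aeval_map_algebraMap]; exact hα2f)
  obtain ⟨r, hfac⟩ := hpdvd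
  have hpsep : p.Separable := (hsep.map).of_dvd ⟨r, hfac⟩
  have hpdeg_ge2 : 2 ≤ p.natDegree := by
    show 2 ≤ (minpoly (↥L) α2).natDegree
    rw [minpoly.two_le_natDegree_iff hint2]
    intro hmem
    obtain ⟨y, hy⟩ := hmem
    apply hα2L
    rw [← hy]
    exact y.2
  -- α is not a root of p
  have hαnotp : aeval α p ≠ 0 := by
    intro hcon
    have h1 : p = minpoly L α := minpoly.eq_of_irreducible_of_monic hpirr hcon hpmonic
    have h2 : minpoly L α = X - C (⟨α, hα⟩ : L) := minpoly.eq_X_sub_C Ω (⟨α, hα⟩ : L)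
    rw [h2] at h1
    have := congrArg natDegree h1
    rw [natDegree_X_sub_C] at this
    omega
  have hfne : f ≠ 0 := minpoly.ne_zero hint
  -- degree of p is 2
  have hpdeg : p.natDegree = 2 := by
    have hrne : r ≠ 0 := by
      intro h
      rw [h, mul_zero] at hfac
      exact (Polynomial.map_ne_zero_iff (algebraMap K L).injective).2 hfne hfac
    have hαr : aeval α r = 0 := by
      have h0 : aeval α (f.map (algebraMap K L)) = 0 := by
        rw [aeval_map_algebraMap]; exact hαf
      rw [hfac, map_mul] at h0
      exact (mul_eq_zero.mp h0).resolve_left hαnotp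
    have hrdeg : 1 ≤ r.natDegree := by
      by_contra h
      push_neg at h
      interval_cases h' : r.natDegree
      · obtain ⟨c, hc⟩ := Polynomial.natDegree_eq_zero.mp h'
        rw [← hc] at hαr hrne
        rw [aeval_C] at hαr
        have hc0 : c = 0 := (algebraMap (L : Type) Ω).injective (by rw [hαr, map_zero])
        exact hrne (by rw [hc0]; exact Polynomial.C_0)
    have hmul : (f.map (algebraMap K L)).natDegree = p.natDegree + r.natDegree := by
      rw [hfac, Polynomial.natDegree_mul (fun h => by simp [h] at hpirr) hrne]
    rw [natDegree_map, hdeg3] at hmul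
    omega
  -- roots of p in Ω
  set P : Polynomial Ω := p.map (algebraMap L Ω) with hPdef
  have hPsplits : Splits P := IsAlgClosed.splits P
  have hPcard : Multiset.card P.roots = 2 := by
    have h1 : p.natDegree = Multiset.card P.roots := by
      rw [← natDegree_map (algebraMap (L : Type) Ω)]; exact hPsplits.natDegree_eq_card_roots
    rw [hpdeg] at h1
    omega
  have hPnd : P.roots.Nodup := nodup_roots (hpsep.map)
  have hPne : P ≠ 0 := (Polynomial.map_ne_zero_iff (algebraMap (L : Type) Ω).injective).2
    (minpoly.ne_zero hint2)
  have hmemP : ∀ β : Ω, aeval β p = 0 → β ∈ P.roots := by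
    intro β hβ
    rw [mem_roots hPne]
    rw [IsRoot.def, eval_map, ← aeval_def]
    exact hβ
  have hα2P : α2 ∈ P.roots := hmemP α2 hα2p
  -- second root α3
  obtain ⟨α3, hα3P, hα3ne2⟩ : ∃ β ∈ P.roots.toFinset, β ≠ α2 := by
    apply Finset.exists_mem_ne
    · rw [Multiset.toFinset_card_of_nodup hPnd, hPcard]; omega
  rw [Multiset.mem_toFinset] at hα3P
  have hα3p : aeval α3 p = 0 := by
    have := (mem_roots hPne).mp hα3P
    rw [IsRoot.def, eval_map, ← aeval_def] at this
    exact this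
  have hα3neα : α3 ≠ α := fun h => hαnotp (h ▸ hα3p)
  have hα3f : aeval α3 f = 0 := by
    have : aeval α3 (f.map (algebraMap K L)) = 0 := by
      rw [hfac, map_mul, hα3p, zero_mul]
    rwa [aeval_map_algebraMap] at this
  -- dichotomy for roots of p
  have hpcases : ∀ β : Ω, aeval β p = 0 → β = α2 ∨ β = α3 := by
    intro β hβ
    have : β ∈ ({α2, α3} : Finset Ω) := by
      apply mem_finset_of_mem_multiset hPnd _ _ (hmemP β hβ)
      · intro x hx
        rcases Finset.mem_insert.mp hx with h | h
        · rw [h]; exact hα2P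
        · rw [Finset.mem_singleton.mp h]; exact hα3P
      · rw [hPcard, Finset.card_insert_of_notMem (by simp [hα3ne2.symm]), Finset.card_singleton]
    simpa using this
  -- the automorphism s over L swapping α2, α3
  obtain ⟨σ, hσ⟩ := minpoly.exists_algEquiv_of_root (K := L) (L := Ω)
    hint2.isAlgebraic hα3p
  set g1 : Ω ≃ₐ[K] Ω := σ.restrictScalars K with hg1def
  have hg1app : ∀ x, g1 x = σ x := fun x => rfl
  have hχg1 : χ g1 = 1 := hχ σ
  have hg1α : g1 α = α := by
    rw [hg1app]
    have : α = algebraMap L Ω (⟨α, hα⟩ : L) := rfl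
    rw [this, AlgEquiv.commutes]
  have hg1_3 : g1 α3 = α2 := hσ
  have hg1_2 : g1 α2 = α3 := by
    have hroots : aeval (g1 α2) p = 0 := by
      rw [hg1app, aeval_algHom_apply σ α2 p, hα2p, map_zero]
    rcases hpcases _ hroots with h | h
    · exact absurd (g1.injective (h.trans hg1_3.symm) : α2 = α3)
        (fun hh => hα3ne2 hh.symm)
    · exact h
  -- trichotomy for roots of f
  set Fm : Polynomial Ω := f.map (algebraMap K Ω) with hFmdef
  have hFsplits : Splits Fm := IsAlgClosed.splits Fm
  have hFcard : Multiset.card Fm.roots = 3 := by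
    have h1 : f.natDegree = Multiset.card Fm.roots := by
      rw [← natDegree_map (algebraMap K Ω)]; exact hFsplits.natDegree_eq_card_roots
    rw [hdeg3] at h1
    omega
  have hFnd : Fm.roots.Nodup := nodup_roots (hsep.map)
  have hFne : Fm ≠ 0 := (Polynomial.map_ne_zero_iff (algebraMap K Ω).injective).2 hfne
  have hmemF : ∀ β : Ω, aeval β f = 0 → β ∈ Fm.roots := by
    intro β hβ
    rw [mem_roots hFne, IsRoot.def, eval_map, ← aeval_def]
    exact hβ
  have hne3α : α2 ≠ α3 := fun h => hα3ne2 h.symm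
  have htri : ∀ β : Ω, aeval β f = 0 → β = α ∨ β = α2 ∨ β = α3 := by
    intro β hβ
    have : β ∈ ({α, α2, α3} : Finset Ω) := by
      apply mem_finset_of_mem_multiset hFnd _ _ (hmemF β hβ)
      · intro x hx
        simp only [Finset.mem_insert, Finset.mem_singleton] at hx
        rcases hx with h | h | h
        · rw [h]; exact hmemF α hαf
        · rw [h]; exact hmemF α2 hα2f
        · rw [h]; exact hmemF α3 hα3f
      · rw [hFcard]
        rw [Finset.card_insert_of_notMem (by simp [hne2α.symm, hα3neα.symm])]
        rw [Finset.card_insert_of_notMem (by simp [hα3ne2.symm]), Finset.card_singleton]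
    simpa using this
  -- χ σ0 = 1
  have hσ0α : σ0 α = α2 := rfl
  have hχσ0 : χ σ0 = 1 := by
    have hne : σ0 α2 ≠ α2 := by
      intro h
      exact hne2α (σ0.injective (h.trans hσ0α.symm))
    rcases htri (σ0 α2) (hroot_of σ0 α2 hα2f) with hB | hcon | hA
    · -- case B : σ0 α2 = α
      have h3ne2 : σ0 α3 ≠ α2 := fun h =>
        hα3neα (σ0.injective (h.trans hσ0α.symm))
      have h3neα : σ0 α3 ≠ α := fun h =>
        hne3α (σ0.injective (hB.trans h.symm))
      have hσ0α3 : σ0 α3 = α3 := by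
        rcases htri (σ0 α3) (hroot_of σ0 α3 hα3f) with h | h | h
        · exact absurd h h3neα
        · exact absurd h h3ne2
        · exact h
      have hc2 : χ σ0 * χ σ0 = 1 := by
        have h0 := hkey (σ0 * σ0) (by rw [AlgEquiv.mul_apply, hσ0α, hB])
        simp only [map_mul] at h0
        exact h0
      have hc3 : χ σ0 * χ σ0 * χ σ0 = 1 := by
        have hw : (σ0 * g1 * (σ0 * g1) * (σ0 * g1)) α = α := by
          simp only [AlgEquiv.mul_apply]
          rw [hg1α, hσ0α, hg1_2, hσ0α3, hg1_3, hB]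
        have h0 := hkey _ hw
        simp only [map_mul, hχg1, mul_one] at h0
        exact h0
      rw [hc2, one_mul] at hc3
      exact hc3
    · exact absurd hcon hne
    · -- case A : σ0 α2 = α3
      have h3ne2 : σ0 α3 ≠ α2 := fun h =>
        hα3neα (σ0.injective (h.trans hσ0α.symm))
      have h3ne3 : σ0 α3 ≠ α3 := fun h =>
        hne3α (σ0.injective (hA.trans h.symm))
      have hσ0α3 : σ0 α3 = α := by
        rcases htri (σ0 α3) (hroot_of σ0 α3 hα3f) with h | h | h
        · exact h
        · exact absurd h h3ne2
        · exact absurd h h3ne3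
      have hc3 : χ σ0 * χ σ0 * χ σ0 = 1 := by
        have hw : (σ0 * σ0 * σ0) α = α := by
          simp only [AlgEquiv.mul_apply]
          rw [hσ0α, hA, hσ0α3]
        have h0 := hkey _ hw
        simp only [map_mul] at h0
        exact h0
      have hc2 : χ σ0 * χ σ0 = 1 := by
        have hw : (σ0 * g1 * (σ0 * g1)) α = α := by
          simp only [AlgEquiv.mul_apply]
          rw [hg1α, hσ0α, hg1_2, hσ0α3]
        have h0 := hkey _ hw
        simp only [map_mul, hχg1, mul_one] at h0
        exact h0
      rw [hc2, one_mul] at hc3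
      exact hc3
  -- final
  intro τ
  rcases htri (τ α) (hroot_of τ α hαf) with h | h | h
  · exact hkey τ h
  · rw [heqχ τ σ0 (h.trans hσ0α.symm)]
    exact hχσ0
  · have : (g1 * σ0) α = α3 := by rw [AlgEquiv.mul_apply, hσ0α, hg1_2]
    rw [heqχ τ (g1 * σ0) (h.trans this.symm), map_mul, hχg1, hχσ0, mul_one]
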